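/- On ℝ⁵ consider the C^∞ vector fields g₁(x) = (−1/2, 0, 1, 0, 0), g₂(x) = (0, −1/2, 0, 1, 0), g₃(x) = (−x₂/2, x₁/2, 0, 0, 1). Then for every x ∈ ℝ⁵, the five vectors g₁(x), g₂(x), g₃(x), [g₃, g₁](x), [g₃, g₂](x) are linearly independent, hence span ℝ⁵ (i.e., the distribution H₁,₃ = {g₁, g₂, g₃, [g₃,g₁], [g₃,g₂]} has rank 5 everywhere). -/

import Mathlib

/-- First input vector field of the three-input, five-state example. -/
noncomputable def exG1 (_x : Fin 5 → ℝ) : Fin 5 → ℝ := ![-(1/2), 0, 1, 0, 0]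

/-- Second input vector field of the three-input, five-state example. -/
noncomputable def exG2 (_x : Fin 5 → ℝ) : Fin 5 → ℝ := ![0, -(1/2), 0, 1, 0]

/-- Third input vector field of the three-input, five-state example. -/
noncomputable def exG3 (x : Fin 5 → ℝ) : Fin 5 → ℝ := ![-(x 1)/2, x 0/2, 0, 0, 1]

/-- Linear part of `exG3`. -/
noncomputable def exL3 : (Fin 5 → ℝ) →L[ℝ] (Fin 5 → ℝ) :=
  ContinuousLinearMap.pi
    ![(-(1/2) : ℝ) • ContinuousLinearMap.proj 1,
      ((1/2) : ℝ) • ContinuousLinearMap.proj 0, 0, 0, 0]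

lemma exG3_eq : exG3 = fun x => exL3 x + ![0, 0, 0, 0, 1] := by
  funext x
  ext i
  fin_cases i <;>
    simp [exG3, exL3, ContinuousLinearMap.pi_apply] <;> ring

lemma fderiv_exG3 (x : Fin 5 → ℝ) : fderiv ℝ exG3 x = exL3 := by
  rw [exG3_eq]
  exact (exL3.hasFDerivAt.add_const _).fderiv

lemma fderiv_exG1 (x : Fin 5 → ℝ) : fderiv ℝ exG1 x = 0 := by
  have : exG1 = fun _ => ![-(1/2), 0, 1, 0, 0] := rfl
  rw [this, fderiv_fun_const]; rfl

lemma fderiv_exG2 (x : Fin 5 → ℝ) : fderiv ℝ exG2 x = 0 := by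
  have : exG2 = fun _ => ![0, -(1/2), 0, 1, 0] := rfl
  rw [this, fderiv_fun_const]; rfl

lemma bracket31 (x : Fin 5 → ℝ) :
    VectorField.lieBracket ℝ exG3 exG1 x = ![0, 1/4, 0, 0, 0] := by
  rw [VectorField.lieBracket, fderiv_exG1, fderiv_exG3]
  ext i
  fin_cases i <;>
    simp [exG1, exG3, exL3, ContinuousLinearMap.pi_apply] <;> norm_num

lemma bracket32 (x : Fin 5 → ℝ) :
    VectorField.lieBracket ℝ exG3 exG2 x = ![-(1/4), 0, 0, 0, 0] := by
  rw [VectorField.lieBracket, fderiv_exG2, fderiv_exG3]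
  ext i
  fin_cases i <;>
    simp [exG2, exG3, exL3, ContinuousLinearMap.pi_apply] <;> norm_num

theorem example_H13_full_rank :
    ∀ x : Fin 5 → ℝ,
      LinearIndependent ℝ
        ![exG1 x, exG2 x, exG3 x,
          VectorField.lieBracket ℝ exG3 exG1 x,
          VectorField.lieBracket ℝ exG3 exG2 x] ∧
      Submodule.span ℝ
        (Set.range ![exG1 x, exG2 x, exG3 x,
          VectorField.lieBracket ℝ exG3 exG1 x,
          VectorField.lieBracket ℝ exG3 exG2 x]) = ⊤ := by
  intro x
  set A : Matrix (Fin 5) (Fin 5) ℝ :=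
    ![exG1 x, exG2 x, exG3 x,
      VectorField.lieBracket ℝ exG3 exG1 x,
      VectorField.lieBracket ℝ exG3 exG2 x] with hA
  have hdet : A.det ≠ 0 := by
    rw [hA, bracket31, bracket32]
    rw [show ∀ M : Fin 5 → Fin 5 → ℝ, Matrix.det M = Matrix.det (Matrix.of M) from fun _ => rfl]
    simp [exG1, exG2, exG3, Matrix.det_succ_row_zero, Fin.sum_univ_succ, Fin.succAbove]
  have hli : LinearIndependent ℝ fun i => A i :=
    Matrix.linearIndependent_rows_iff_isUnit.2 (Matrix.isUnit_iff_isUnit_det A |>.2 hdet.isUnit)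
  have hli' : LinearIndependent ℝ A := hli
  refine ⟨hli', ?_⟩
  have hcard : Fintype.card (Fin 5) = Module.finrank ℝ (Fin 5 → ℝ) := by
    simp
  exact LinearIndependent.span_eq_top_of_card_eq_finrank hli' hcard
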